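/- Let λ > 0 and y ∈ ℝ². Define φ(x) = log(32λ²·(4 + λ²|x−y|²)^{−2}) and ζ(x) = (4 + λ²|x−y|²)^{−2} for x ∈ ℝ². Then ∫_{ℝ²} |∇ζ(x)|² dx − ∫_{ℝ²} e^{φ(x)}·ζ(x)² dx = −π/320. -/

import Mathlib

open MeasureTheory Real Filter

section Aux

open Set InnerProductSpace

private lemma radial_integral_aux (f : ℝ → ℝ) (y : EuclideanSpace ℝ (Fin 2)) :
    ∫ x : EuclideanSpace ℝ (Fin 2), f ‖x - y‖ = 2 * π * ∫ r in Ioi (0:ℝ), r * f r := by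
  have h1 : ∫ x : EuclideanSpace ℝ (Fin 2), f ‖x - y‖
      = ∫ x : EuclideanSpace ℝ (Fin 2), f ‖x‖ :=
    integral_sub_right_eq_self (fun x : EuclideanSpace ℝ (Fin 2) => f ‖x‖) y
  rw [h1, integral_fun_norm_addHaar volume f]
  have hdim : Module.finrank ℝ (EuclideanSpace ℝ (Fin 2)) = 2 := finrank_euclideanSpace_fin
  have hball : (volume (Metric.ball (0:EuclideanSpace ℝ (Fin 2)) 1)).toReal = π := by
    rw [EuclideanSpace.volume_ball]
    norm_num [Real.sq_sqrt Real.pi_nonneg, Real.Gamma_two,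
      ENNReal.toReal_ofReal Real.pi_nonneg]
  rw [hdim, measureReal_def, hball]
  simp [smul_eq_mul]
  ring

private lemma deriv_base_aux (l : ℝ) (r : ℝ) :
    HasDerivAt (fun r : ℝ => 4 + l^2*r^2) (l^2*(2*r)) r := by
  simpa using ((hasDerivAt_pow 2 r).const_mul (l^2)).const_add 4

private lemma oneD_int1_aux (l : ℝ) (hl : 0 < l) :
    ∫ r in Ioi (0:ℝ), r * (16*l^4*r^2 * ((4+l^2*r^2)^6)⁻¹) = 1/640 := by
  have hw : ∀ r : ℝ, (0:ℝ) < 4 + l^2*r^2 := fun r => by positivity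
  have hder : ∀ r ∈ Ici (0:ℝ), HasDerivAt
      (fun r : ℝ => -2*((4+l^2*r^2)^4)⁻¹ + 32/5*((4+l^2*r^2)^5)⁻¹)
      (r * (16*l^4*r^2 * ((4+l^2*r^2)^6)⁻¹)) r := by
    intro r _
    have h4 := (((deriv_base_aux l r).pow 4).inv (pow_ne_zero 4 (hw r).ne')).const_mul (-2 : ℝ)
    have h5 := (((deriv_base_aux l r).pow 5).inv (pow_ne_zero 5 (hw r).ne')).const_mul (32/5 : ℝ)
    refine (h4.add h5).congr_deriv ?_
    simp only [Pi.pow_apply]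
    have := (hw r).ne'
    field_simp
    ring
  have hwt : Tendsto (fun r : ℝ => 4 + l^2*r^2) atTop atTop :=
    tendsto_atTop_add_const_left _ 4
      ((tendsto_pow_atTop two_ne_zero).const_mul_atTop (by positivity))
  have htop : Tendsto (fun r : ℝ => -2*((4+l^2*r^2)^4)⁻¹ + 32/5*((4+l^2*r^2)^5)⁻¹)
      atTop (nhds 0) := by
    have h4 : Tendsto (fun r : ℝ => ((4+l^2*r^2)^4)⁻¹) atTop (nhds 0) :=
      tendsto_inv_atTop_zero.comp ((tendsto_pow_atTop (by norm_num : (4:ℕ) ≠ 0)).comp hwt)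
    have h5 : Tendsto (fun r : ℝ => ((4+l^2*r^2)^5)⁻¹) atTop (nhds 0) :=
      tendsto_inv_atTop_zero.comp ((tendsto_pow_atTop (by norm_num : (5:ℕ) ≠ 0)).comp hwt)
    simpa using (h4.const_mul (-2:ℝ)).add (h5.const_mul (32/5:ℝ))
  have hpos : ∀ r ∈ Ioi (0:ℝ), 0 ≤ r * (16*l^4*r^2 * ((4+l^2*r^2)^6)⁻¹) := by
    intro r hr; have := le_of_lt (mem_Ioi.mp hr); positivity
  rw [integral_Ioi_of_hasDerivAt_of_nonneg' hder hpos htop]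
  norm_num

private lemma oneD_int2_aux (l : ℝ) (hl : 0 < l) :
    ∫ r in Ioi (0:ℝ), r * (32*l^2 * ((4+l^2*r^2)^6)⁻¹) = 1/320 := by
  have hw : ∀ r : ℝ, (0:ℝ) < 4 + l^2*r^2 := fun r => by positivity
  have hder : ∀ r ∈ Ici (0:ℝ), HasDerivAt
      (fun r : ℝ => -(16/5)*((4+l^2*r^2)^5)⁻¹)
      (r * (32*l^2 * ((4+l^2*r^2)^6)⁻¹)) r := by
    intro r _
    have h5 := (((deriv_base_aux l r).pow 5).inv (pow_ne_zero 5 (hw r).ne')).const_mul (-(16/5) : ℝ)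
    refine h5.congr_deriv ?_
    simp only [Pi.pow_apply]
    have := (hw r).ne'
    field_simp
    ring
  have hwt : Tendsto (fun r : ℝ => 4 + l^2*r^2) atTop atTop :=
    tendsto_atTop_add_const_left _ 4
      ((tendsto_pow_atTop two_ne_zero).const_mul_atTop (by positivity))
  have htop : Tendsto (fun r : ℝ => -(16/5)*((4+l^2*r^2)^5)⁻¹) atTop (nhds 0) := by
    have h5 : Tendsto (fun r : ℝ => ((4+l^2*r^2)^5)⁻¹) atTop (nhds 0) :=
      tendsto_inv_atTop_zero.comp ((tendsto_pow_atTop (by norm_num : (5:ℕ) ≠ 0)).comp hwt)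
    simpa using h5.const_mul (-(16/5):ℝ)
  have hpos : ∀ r ∈ Ioi (0:ℝ), 0 ≤ r * (32*l^2 * ((4+l^2*r^2)^6)⁻¹) := by
    intro r hr; have := le_of_lt (mem_Ioi.mp hr); positivity
  rw [integral_Ioi_of_hasDerivAt_of_nonneg' hder hpos htop]
  norm_num

private lemma gradient_zeta_aux (l : ℝ) (y x : EuclideanSpace ℝ (Fin 2))
    (ζ : EuclideanSpace ℝ (Fin 2) → ℝ)
    (hζdef : ∀ x, ζ x = ((4 + l ^ 2 * ‖x - y‖ ^ 2) ^ 2)⁻¹) :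
    HasGradientAt ζ
      ((-(2 * (4 + l ^ 2 * ‖x - y‖ ^ 2) ^ (2-1) * (l ^ 2 * 1))
        / ((4 + l ^ 2 * ‖x - y‖ ^ 2) ^ 2) ^ 2 * 2) • (x - y)) x := by
  set t := ‖x - y‖ ^ 2 with ht
  have hq : HasFDerivAt (fun z : EuclideanSpace ℝ (Fin 2) => ‖z - y‖ ^ 2)
      (toDual ℝ (EuclideanSpace ℝ (Fin 2)) ((2:ℝ) • (x - y))) x := by
    have A := ((hasFDerivAt_id x).sub_const y).inner ℝ (((hasFDerivAt_id x).sub_const y))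
    have hfe : (fun z : EuclideanSpace ℝ (Fin 2) => (inner ℝ (z - y) (z - y) : ℝ))
        = fun z => ‖z - y‖ ^ 2 := by
      funext z; rw [real_inner_self_eq_norm_sq]
    simp only [id_eq] at A
    rw [hfe] at A
    refine A.congr_fderiv ?_
    ext v
    simp [fderivInnerCLM_apply, toDual_apply_apply, real_inner_comm, inner_smul_left, two_smul,
      inner_add_left]
    rw [inner_sub_right, real_inner_comm x v, real_inner_comm y v]
  have hg : HasDerivAt (fun s : ℝ => ((4 + l ^ 2 * s) ^ 2)⁻¹)
      (-(2 * (4 + l ^ 2 * t) ^ (2-1) * (l ^ 2 * 1)) / ((4 + l ^ 2 * t) ^ 2) ^ 2) t := by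
    have hwpos : (0:ℝ) < 4 + l ^ 2 * t := by
      have : (0:ℝ) ≤ l ^ 2 * t := by rw [ht]; positivity
      linarith
    exact ((((hasDerivAt_id t).const_mul (l ^ 2)).const_add 4).pow 2).inv (pow_ne_zero 2 hwpos.ne')
  have hcomp := hg.comp_hasFDerivAt x hq
  rw [hasGradientAt_iff_hasFDerivAt]
  have hfun : ζ = (fun s : ℝ => ((4 + l ^ 2 * s) ^ 2)⁻¹)
      ∘ (fun z : EuclideanSpace ℝ (Fin 2) => ‖z - y‖ ^ 2) := by
    funext z; simp [hζdef]
  rw [hfun]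
  refine hcomp.congr_fderiv ?_
  ext v
  simp [toDual_apply_apply, inner_smul_left, smul_smul]

end Aux

/-- The explicit energy computation in the proof of Theorem 4.2: the quadratic form of
the linearized operator `-Δ - e^φ` at the test function `ζ` equals `-π/320`. -/
theorem liouville_energy_value
    (l : ℝ) (hl : 0 < l) (y : EuclideanSpace ℝ (Fin 2))
    (φ ζ : EuclideanSpace ℝ (Fin 2) → ℝ)
    (hφdef : ∀ x, φ x = Real.log (32 * l ^ 2 * ((4 + l ^ 2 * ‖x - y‖ ^ 2) ^ 2)⁻¹))
    (hζdef : ∀ x, ζ x = ((4 + l ^ 2 * ‖x - y‖ ^ 2) ^ 2)⁻¹) :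
    (∫ x, ‖gradient ζ x‖ ^ 2 ∂(volume : Measure (EuclideanSpace ℝ (Fin 2))))
      - (∫ x, Real.exp (φ x) * ζ x ^ 2
          ∂(volume : Measure (EuclideanSpace ℝ (Fin 2))))
      = -(Real.pi / 320) := by
  have hwpos : ∀ x : EuclideanSpace ℝ (Fin 2), (0:ℝ) < 4 + l ^ 2 * ‖x - y‖ ^ 2 :=
    fun x => by positivity
  -- the gradient term is radial
  have h1 : (fun x : EuclideanSpace ℝ (Fin 2) => ‖gradient ζ x‖ ^ 2)
      = fun x => (fun r : ℝ => 16*l^4*r^2 * ((4+l^2*r^2)^6)⁻¹) ‖x - y‖ := by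
    funext x
    rw [(gradient_zeta_aux l y x ζ hζdef).gradient]
    rw [norm_smul, mul_pow, Real.norm_eq_abs, sq_abs]
    have hne := (hwpos x).ne'
    field_simp
    ring
  -- the potential term is radial
  have h2 : (fun x : EuclideanSpace ℝ (Fin 2) => Real.exp (φ x) * ζ x ^ 2)
      = fun x => (fun r : ℝ => 32*l^2 * ((4+l^2*r^2)^6)⁻¹) ‖x - y‖ := by
    funext x
    rw [hφdef, hζdef, Real.exp_log (by positivity)]
    have hne := (hwpos x).ne'
    field_simp
  rw [h1, h2, radial_integral_aux (fun r : ℝ => 16*l^4*r^2 * ((4+l^2*r^2)^6)⁻¹) y,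
    radial_integral_aux (fun r : ℝ => 32*l^2 * ((4+l^2*r^2)^6)⁻¹) y,
    oneD_int1_aux l hl, oneD_int2_aux l hl]
  ring
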